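/- For all holomorphic tangent fields U, V on M the Lie bracket [U,V] is again a holomorphic tangent field and ∇_U V − ∇_V U = [U, V]; that is, Tor_∇(U,V) = 0 on holomorphic fields. -/

import Mathlib

noncomputable section
open scoped BigOperators

/-- `ℂ^{n+1}`, identified with `ℝ^{2n+2}` via its real structure. -/
abbrev E (n : ℕ) : Type := EuclideanSpace ℂ (Fin (n + 1))

/-- The standard complex structure: multiplication by `i`. -/
def J {n : ℕ} (v : E n) : E n := Complex.I • v

/-- The real inner product `⟨x, y⟩ = Re ⟪x, y⟫`. -/
def rI {n : ℕ} (x y : E n) : ℝ := (inner ℂ x y : ℂ).re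

/-- The (real) tangent space at `p` of a hypersurface with unit normal `ν`. -/
def tangAt {n : ℕ} (ν : E n → E n) (p : E n) : Set (E n) := {X | rI (ν p) X = 0}

/-- `M` is a smooth embedded real hypersurface of `ℂ^{n+1}` (locally a regular zero
set of a smooth real function), oriented by the smooth unit normal field `ν`
(extended smoothly to the ambient space). -/
def IsHypersurface {n : ℕ} (M : Set (E n)) (ν : E n → E n) : Prop :=
  ContDiff ℝ (⊤ : ℕ∞) ν ∧ (∀ p ∈ M, ‖ν p‖ = 1) ∧
    ∀ p ∈ M, ∃ (V : Set (E n)) (F : E n → ℝ), IsOpen V ∧ p ∈ V ∧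
      ContDiffOn ℝ (⊤ : ℕ∞) F V ∧ (M ∩ V = {z ∈ V | F z = 0}) ∧
      ∀ z ∈ M ∩ V, ∀ X : E n, (fderiv ℝ F z X = 0 ↔ X ∈ tangAt ν z)

/-- The horizontal (maximal complex) subspace `H_p = {X ∈ T_pM : JX ∈ T_pM}`. -/
def horizAt {n : ℕ} (ν : E n → E n) (p : E n) : Set (E n) :=
  {X | X ∈ tangAt ν p ∧ J X ∈ tangAt ν p}

/-- The second fundamental form `h(X,Y) = ⟨X, ∂_Y ν⟩`. -/
def sff {n : ℕ} (ν : E n → E n) (p : E n) (X Y : E n) : ℝ :=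
  rI X (fderiv ℝ ν p Y)

/-- The family `X_1, …, X_n, J X_1, …, J X_n`. -/
def combined {n : ℕ} (X : Fin n → E n) : (Fin n ⊕ Fin n) → E n :=
  Sum.elim X (fun α => J (X α))

/-- `{X_1, …, X_n, J X_1, …, J X_n}` is an orthonormal basis of the horizontal
space at `p` (w.r.t. the real inner product). -/
def IsHorizONB {n : ℕ} (ν : E n → E n) (p : E n) (X : Fin n → E n) : Prop :=
  (∀ α, X α ∈ horizAt ν p) ∧
  (∀ i j, rI (combined X i) (combined X j) = if i = j then 1 else 0) ∧
  (∀ Y ∈ horizAt ν p, Y ∈ Submodule.span ℝ (Set.range (combined X)))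

/-! ## Complexified tangent vectors
A complexified vector `X + iY` (the complexification unit `i` is distinct from
the complex structure `J`) is modelled as the pair `(X, Y)`. -/

/-- Complexified vectors of `ℂ^{n+1}`: `(X, Y)` stands for `X + iY`. -/
abbrev CV (n : ℕ) : Type := E n × E n

/-- Conjugation `X + iY ↦ X - iY`. -/
def conjCV {n : ℕ} (v : CV n) : CV n := (v.1, -v.2)

/-- Multiplication of a complexified vector by a complex scalar. -/
def csmul {n : ℕ} (c : ℂ) (v : CV n) : CV n :=
  (c.re • v.1 - c.im • v.2, c.re • v.2 + c.im • v.1)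

/-- `g`, the complex-bilinear extension of the real inner product. -/
def gC {n : ℕ} (v w : CV n) : ℂ :=
  ((rI v.1 w.1 - rI v.2 w.2 : ℝ) : ℂ) + ((rI v.1 w.2 + rI v.2 w.1 : ℝ) : ℂ) * Complex.I

/-- The flat connection `D` of `ℂ^{n+1}` (componentwise directional derivative),
complex-bilinearly extended: `DD V u p = D_u V (p)`. -/
def DD {n : ℕ} (V : E n → CV n) (u : CV n) (p : E n) : CV n :=
  (fderiv ℝ (fun z => (V z).1) p u.1 - fderiv ℝ (fun z => (V z).2) p u.2,
   fderiv ℝ (fun z => (V z).1) p u.2 + fderiv ℝ (fun z => (V z).2) p u.1)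

/-- The Lie bracket `[U,V]` of complexified fields (for the flat ambient space
it is `D_U V - D_V U`). -/
def bracket {n : ℕ} (U V : E n → CV n) (p : E n) : CV n :=
  DD V (U p) p - DD U (V p) p

/-- Derivative `U f` of a complex function along a complexified vector. -/
def dC {n : ℕ} (f : E n → ℂ) (u : CV n) (p : E n) : ℂ :=
  (fderiv ℝ f p u.1) + Complex.I * (fderiv ℝ f p u.2)

/-- The field `T = J(ν)`, viewed as a complexified field. -/
def TF {n : ℕ} (ν : E n → E n) (z : E n) : CV n := (J (ν z), 0)

/-- The holomorphic unit normal `N = (ν - iT)/√2`. -/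
def NF {n : ℕ} (ν : E n → E n) (z : E n) : CV n :=
  ((Real.sqrt 2)⁻¹ • ν z, -((Real.sqrt 2)⁻¹ • J (ν z)))

/-- The complex-bilinear extension of the second fundamental form:
`h(Z, W) = g(Z, D_W ν)`. -/
def hC {n : ℕ} (ν : E n → E n) (p : E n) (v w : CV n) : ℂ :=
  gC v (fderiv ℝ ν p w.1, fderiv ℝ ν p w.2)

/-- Conjugate of a complexified field. -/
def conjF {n : ℕ} (V : E n → CV n) : E n → CV n := fun z => conjCV (V z)

/-- A holomorphic tangent field `Z = X - iJX`, with `X` a smooth real field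
satisfying `⟪X, ν⟫ = 0` (hermitian orthogonality) at every point of `M`. -/
def IsHoloField {n : ℕ} (M : Set (E n)) (ν : E n → E n) (Z : E n → CV n) : Prop :=
  ContDiff ℝ (⊤ : ℕ∞) (fun z => (Z z).1) ∧
  (∀ z, (Z z).2 = -J ((Z z).1)) ∧
  ∀ p ∈ M, (inner ℂ (ν p) ((Z p).1) : ℂ) = 0

/-- A complexified tangent field: a smooth field whose value at every point of
`M` lies in the complexified tangent space `ℂ T_p M`. -/
def IsCTField {n : ℕ} (M : Set (E n)) (ν : E n → E n) (V : E n → CV n) : Prop :=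
  ContDiff ℝ (⊤ : ℕ∞) (fun z => (V z).1) ∧ ContDiff ℝ (⊤ : ℕ∞) (fun z => (V z).2) ∧
  ∀ p ∈ M, rI (ν p) ((V p).1) = 0 ∧ rI (ν p) ((V p).2) = 0

/-- Projection of a real vector onto the real horizontal space (orthogonal
complement of `ν` and `T = Jν`). -/
def horR {n : ℕ} (ν : E n → E n) (z : E n) (x : E n) : E n :=
  x - rI (ν z) x • ν z - rI (J (ν z)) x • J (ν z)

/-- Projection `Π_H` of a complexified tangent vector onto the holomorphic bundle. -/
def PiH {n : ℕ} (ν : E n → E n) (z : E n) (v : CV n) : CV n :=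
  ((2 : ℝ)⁻¹ • (horR ν z v.1 + J (horR ν z v.2)),
   (2 : ℝ)⁻¹ • (horR ν z v.2 - J (horR ν z v.1)))

/-- Projection `Π_H̄` onto the antiholomorphic bundle. -/
def PiHb {n : ℕ} (ν : E n → E n) (z : E n) (v : CV n) : CV n :=
  ((2 : ℝ)⁻¹ • (horR ν z v.1 - J (horR ν z v.2)),
   (2 : ℝ)⁻¹ • (horR ν z v.2 + J (horR ν z v.1)))

/-- The connection `∇`: writing `V = Z + W̄ + fT` with `Z = Π_H V` holomorphic,
`W̄ = Π_H̄ V` antiholomorphic and `f = g(V, T)`, one sets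
`∇_u V = D_u Z - g(D_u Z, N̄) N + D_u W̄ - g(D_u W̄, N) N̄ + (u f) T`. -/
def nabla {n : ℕ} (ν : E n → E n) (V : E n → CV n) (u : CV n) (p : E n) : CV n :=
  (DD (fun z => PiH ν z (V z)) u p
      - csmul (gC (DD (fun z => PiH ν z (V z)) u p) (conjCV (NF ν p))) (NF ν p))
  + (DD (fun z => PiHb ν z (V z)) u p
      - csmul (gC (DD (fun z => PiHb ν z (V z)) u p) (NF ν p)) (conjCV (NF ν p)))
  + csmul (dC (fun z => gC (V z) (TF ν z)) u p) (TF ν p)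

/-- The torsion `Tor_∇(U,V) = ∇_U V - ∇_V U - [U,V]`. -/
def Tor {n : ℕ} (ν : E n → E n) (U V : E n → CV n) (p : E n) : CV n :=
  nabla ν V (U p) p - nabla ν U (V p) p - bracket U V p

/-- The covariant derivative of the second fundamental form:
`∇_Z h (U, W) = Z h(U,W) - h(∇_Z U, W) - h(U, ∇_Z W)`. -/
def nablaHform {n : ℕ} (ν : E n → E n) (Zf U W : E n → CV n) (p : E n) : ℂ :=
  dC (fun z => hC ν z (U z) (W z)) (Zf p) p
    - hC ν p (nabla ν U (Zf p) p) (W p) - hC ν p (U p) (nabla ν W (Zf p) p)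

/-! ## Helper lemmas -/

section Helpers
variable {n : ℕ}

lemma le_inf1 : ((⊤:ℕ∞) : WithTop ℕ∞) ≠ 0 := by simp
lemma le_inf2 : minSmoothness ℝ 2 ≤ ((⊤:ℕ∞) : WithTop ℕ∞) := by
  rw [minSmoothness_of_isRCLikeNormedField]; exact WithTop.coe_le_coe.mpr le_top

lemma rI_eq (x y : E n) : rI x y = (inner ℝ x y : ℝ) := by
  simp [rI, PiLp.inner_apply, Complex.re_sum]

lemma rI_self (x : E n) : rI x x = ‖x‖ ^ 2 := by
  rw [rI_eq]; exact real_inner_self_eq_norm_sq x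

lemma rI_symm (x y : E n) : rI x y = rI y x := by
  rw [rI_eq, rI_eq]; exact real_inner_comm _ _

lemma J_J (v : E n) : J (J v) = -v := by
  simp [J, smul_smul, Complex.I_mul_I]

lemma J_add (v w : E n) : J (v + w) = J v + J w := by simp [J]
lemma J_neg (v : E n) : J (-v) = -(J v) := by simp [J]
lemma J_sub (v w : E n) : J (v - w) = J v - J w := by simp [J, smul_sub]
lemma J_smul (r : ℝ) (v : E n) : J (r • v) = r • J v := smul_comm _ _ _

lemma rI_J_J (x y : E n) : rI (J x) (J y) = rI x y := by
  simp [rI, J, inner_smul_left, inner_smul_right, Complex.conj_I]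

lemma rI_J_left (x y : E n) : rI (J x) y = (inner ℂ x y : ℂ).im := by
  simp [rI, J, inner_smul_left, Complex.conj_I]

lemma rI_J_right (x y : E n) : rI x (J y) = -(inner ℂ x y : ℂ).im := by
  simp [rI, J, inner_smul_right]

lemma rI_J_swap (x y : E n) : rI (J x) y = -rI x (J y) := by
  rw [rI_J_left, rI_J_right, neg_neg]

lemma rI_zero_right (x : E n) : rI x 0 = 0 := by simp [rI]
lemma rI_neg_left (x y : E n) : rI (-x) y = -rI x y := by simp [rI, inner_neg_left]
lemma rI_neg_right (x y : E n) : rI x (-y) = -rI x y := by simp [rI, inner_neg_right]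
lemma rI_sub_right (x y z : E n) : rI x (y - z) = rI x y - rI x z := by
  simp [rI_eq, inner_sub_right]
lemma rI_sub_left (x y z : E n) : rI (x - y) z = rI x z - rI y z := by
  simp [rI_eq, inner_sub_left]
lemma rI_add_right (x y z : E n) : rI x (y + z) = rI x y + rI x z := by
  simp [rI_eq, inner_add_right]
lemma rI_smul_right (r : ℝ) (x y : E n) : rI x (r • y) = r * rI x y := by
  rw [rI_eq, rI_eq, real_inner_smul_right]
lemma rI_smul_left (r : ℝ) (x y : E n) : rI (r • x) y = r * rI x y := by
  rw [rI_eq, rI_eq, real_inner_smul_left]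

/-- `J` as a continuous `ℝ`-linear map. -/
def Jc (n : ℕ) : E n →L[ℝ] E n :=
  (Complex.I • ContinuousLinearMap.id ℂ (E n)).restrictScalars ℝ

@[simp] lemma Jc_apply (v : E n) : Jc n v = J v := rfl

lemma contDiff_J_comp {f : E n → E n} (hf : ContDiff ℝ (⊤:ℕ∞) f) :
    ContDiff ℝ (⊤:ℕ∞) (fun z => J (f z)) := (Jc n).contDiff.comp hf

lemma fderiv_J_comp {f : E n → E n} {p : E n} (hf : DifferentiableAt ℝ f p) :
    fderiv ℝ (fun z => J (f z)) p = (Jc n).comp (fderiv ℝ f p) := by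
  rw [show (fun z => J (f z)) = (Jc n) ∘ f from rfl,
    fderiv_comp p (Jc n).differentiableAt hf, ContinuousLinearMap.fderiv]

lemma contDiff_rI_comp {f g : E n → E n} (hf : ContDiff ℝ (⊤:ℕ∞) f)
    (hg : ContDiff ℝ (⊤:ℕ∞) g) : ContDiff ℝ (⊤:ℕ∞) (fun z => rI (f z) (g z)) := by
  have h : (fun z => rI (f z) (g z)) = fun z => (inner ℝ (f z) (g z) : ℝ) :=
    funext fun z => rI_eq _ _
  rw [h]; exact hf.inner ℝ hg

lemma fderiv_rI_comp {f g : E n → E n} {p : E n} (hf : DifferentiableAt ℝ f p)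
    (hg : DifferentiableAt ℝ g p) (w : E n) :
    fderiv ℝ (fun z => rI (f z) (g z)) p w
      = rI (f p) (fderiv ℝ g p w) + rI (fderiv ℝ f p w) (g p) := by
  have h : (fun z => rI (f z) (g z)) = fun z => (inner ℝ (f z) (g z) : ℝ) :=
    funext fun z => rI_eq _ _
  rw [h, fderiv_inner_apply ℝ hf hg w, rI_eq, rI_eq]

end Helpers
section Key
variable {n : ℕ}

/-- KEY: the derivative of a function vanishing on `M` along a tangent direction vanishes. -/
lemma key {M : Set (E n)} {ν : E n → E n} (hsurf : IsHypersurface M ν)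
    {p : E n} (hp : p ∈ M) {G : E n → ℝ} (hGd : DifferentiableAt ℝ G p)
    (hG0 : ∀ᶠ z in nhds p, z ∈ M → G z = 0)
    {w : E n} (hw : rI (ν p) w = 0) : fderiv ℝ G p w = 0 := by
  obtain ⟨hν, hnorm, hloc⟩ := hsurf
  obtain ⟨V, F, hVopen, hpV, hF, hMV, hiff⟩ := hloc p hp
  have hpMV : p ∈ M ∩ V := ⟨hp, hpV⟩
  have hFp0 : F p = 0 := by
    have := hMV ▸ hpMV; exact this.2
  have hFat : ContDiffAt ℝ (⊤:ℕ∞) F p := hF.contDiffAt (hVopen.mem_nhds hpV)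
  set f' := fderiv ℝ F p with hf'
  have hstrict : HasStrictFDerivAt F f' p := hFat.hasStrictFDerivAt le_inf1
  have hνp : f' (ν p) ≠ 0 := by
    intro h
    have h1 : rI (ν p) (ν p) = 0 := (hiff p hpMV (ν p)).1 h
    rw [rI_self, hnorm p hp] at h1; norm_num at h1
  have hrange : f'.range = ⊤ := by
    rw [LinearMap.range_eq_top]
    intro r
    exact ⟨(r / f' (ν p)) • ν p, by simp [map_smul]; field_simp⟩
  set ψ : f'.ker → E n := hstrict.implicitFunction F f' hrange (F p) with hψ
  have hψ0 : ψ 0 = p := hstrict.implicitFunction_apply_image hrange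
  have hψd : HasStrictFDerivAt ψ (f'.ker).subtypeL 0 :=
    hstrict.to_implicitFunction hrange
  have hψc : Filter.Tendsto ψ (nhds 0) (nhds p) := by
    have := hψd.continuousAt
    rwa [ContinuousAt, hψ0] at this
  have htend : Filter.Tendsto (fun y : f'.ker => (F p, y)) (nhds 0) (nhds (F p, 0)) :=
    tendsto_const_nhds.prodMk_nhds Filter.tendsto_id
  have hFψ : ∀ᶠ y in nhds (0 : f'.ker), F (ψ y) = F p :=
    htend.eventually (hstrict.map_implicitFunction_eq hrange)
  have hGψ : ∀ᶠ y in nhds (0 : f'.ker), G (ψ y) = 0 := by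
    filter_upwards [hFψ, hψc.eventually (hVopen.mem_nhds hpV),
      hψc.eventually hG0] with y h1 h2 h3
    apply h3
    have : ψ y ∈ M ∩ V := by rw [hMV]; exact ⟨h2, by rw [h1, hFp0]⟩
    exact this.1
  have hfd0 : fderiv ℝ (G ∘ ψ) 0 = 0 := by
    have heq : (G ∘ ψ) =ᶠ[nhds (0 : f'.ker)] (fun _ => 0) := by
      filter_upwards [hGψ] with y h; exact h
    rw [heq.fderiv_eq, fderiv_fun_const]; rfl
  have hcomp : fderiv ℝ (G ∘ ψ) 0 =
      (fderiv ℝ G p).comp (f'.ker).subtypeL := by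
    have h1 : HasFDerivAt G (fderiv ℝ G p) (ψ 0) := by rw [hψ0]; exact hGd.hasFDerivAt
    exact (h1.comp 0 hψd.hasFDerivAt).fderiv
  have hwker : w ∈ f'.ker := by
    rw [LinearMap.mem_ker]
    by_contra h
    exact h ((hiff p hpMV w).2 hw)
  calc fderiv ℝ G p w = (fderiv ℝ (G ∘ ψ) 0) ⟨w, hwker⟩ := by rw [hcomp]; rfl
    _ = 0 := by rw [hfd0]; rfl

/-- The bracket of tangent vector fields is tangent. -/
lemma tangent_bracket {M : Set (E n)} {ν : E n → E n} (hsurf : IsHypersurface M ν)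
    {p : E n} (hp : p ∈ M) {P Q : E n → E n}
    (hP : ContDiff ℝ (⊤:ℕ∞) P) (hQ : ContDiff ℝ (⊤:ℕ∞) Q)
    (hPt : ∀ z ∈ M, rI (ν z) (P z) = 0) (hQt : ∀ z ∈ M, rI (ν z) (Q z) = 0) :
    rI (ν p) (fderiv ℝ P p (Q p) - fderiv ℝ Q p (P p)) = 0 := by
  obtain ⟨hν, hnorm, hloc⟩ := hsurf
  obtain ⟨V, F, hVopen, hpV, hF, hMV, hiff⟩ := hloc p hp
  have hpMV : p ∈ M ∩ V := ⟨hp, hpV⟩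
  have hVnhds : V ∈ nhds p := hVopen.mem_nhds hpV
  have hFat : ContDiffAt ℝ (⊤:ℕ∞) F p := hF.contDiffAt hVnhds
  have hdF : ContDiffAt ℝ (⊤:ℕ∞) (fderiv ℝ F) p := hFat.fderiv_right (by
    exact_mod_cast le_top)
  have hdFd : DifferentiableAt ℝ (fderiv ℝ F) p := hdF.differentiableAt le_inf1
  have hsymm : IsSymmSndFDerivAt ℝ F p := hFat.isSymmSndFDerivAt le_inf2
  -- the two auxiliary functions
  have main : ∀ (P Q : E n → E n), ContDiff ℝ (⊤:ℕ∞) P → ContDiff ℝ (⊤:ℕ∞) Q →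
      (∀ z ∈ M, rI (ν z) (P z) = 0) → (∀ z ∈ M, rI (ν z) (Q z) = 0) →
      fderiv ℝ F p (fderiv ℝ P p (Q p)) + fderiv ℝ (fderiv ℝ F) p (Q p) (P p) = 0 := by
    intro P Q hP hQ hPt hQt
    set G : E n → ℝ := fun z => fderiv ℝ F z (P z) with hG
    have hGd : DifferentiableAt ℝ G p :=
      hdFd.clm_apply (hP.differentiable le_inf1).differentiableAt
    have hG0 : ∀ᶠ z in nhds p, z ∈ M → G z = 0 := by
      filter_upwards [hVnhds] with z hzV hzM
      exact (hiff z ⟨hzM, hzV⟩ (P z)).2 (hPt z hzM)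
    have hkey : fderiv ℝ G p (Q p) = 0 :=
      key ⟨hν, hnorm, hloc⟩ hp hGd hG0 (hQt p hp)
    have hform : fderiv ℝ G p = (fderiv ℝ F p).comp (fderiv ℝ P p)
        + (fderiv ℝ (fderiv ℝ F) p).flip (P p) := by
      exact fderiv_clm_apply hdFd (hP.differentiable le_inf1).differentiableAt
    rw [hform] at hkey
    simpa using hkey
  have h1 := main P Q hP hQ hPt hQt
  have h2 := main Q P hQ hP hQt hPt
  have hsy : fderiv ℝ (fderiv ℝ F) p (Q p) (P p) = fderiv ℝ (fderiv ℝ F) p (P p) (Q p) :=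
    hsymm (Q p) (P p)
  have : fderiv ℝ F p (fderiv ℝ P p (Q p) - fderiv ℝ Q p (P p)) = 0 := by
    rw [map_sub]
    rw [hsy] at h1
    linarith
  exact (hiff p hpMV _).1 this

end Key
section Holo
variable {n : ℕ} {M : Set (E n)} {ν : E n → E n}

lemma holo_rI1 {U : E n → CV n} (hU : IsHoloField M ν U) {z : E n} (hz : z ∈ M) :
    rI (ν z) ((U z).1) = 0 := by
  have := hU.2.2 z hz
  simp [rI, this]

lemma holo_rI2 {U : E n → CV n} (hU : IsHoloField M ν U) {z : E n} (hz : z ∈ M) :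
    rI (ν z) (J ((U z).1)) = 0 := by
  have := hU.2.2 z hz
  rw [rI_J_right, this]; simp

lemma holo_rI3 {U : E n → CV n} (hU : IsHoloField M ν U) {z : E n} (hz : z ∈ M) :
    rI (J (ν z)) ((U z).1) = 0 := by
  rw [rI_J_swap, holo_rI2 hU hz, neg_zero]

/-- Structure of `DD` on a holomorphic field. -/
lemma DD_holo {V : E n → CV n} (hV1 : ContDiff ℝ (⊤:ℕ∞) (fun z => (V z).1))
    (hV2 : ∀ z, (V z).2 = -J ((V z).1)) (u : CV n) (p : E n) :
    DD V u p = (fderiv ℝ (fun z => (V z).1) p u.1 + J (fderiv ℝ (fun z => (V z).1) p u.2),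
                fderiv ℝ (fun z => (V z).1) p u.2 - J (fderiv ℝ (fun z => (V z).1) p u.1)) := by
  have hd : DifferentiableAt ℝ (fun z => (V z).1) p :=
    (hV1.differentiable le_inf1).differentiableAt
  have h2 : (fun z => (V z).2) = fun z => -J ((V z).1) := funext hV2
  have hfd2 : fderiv ℝ (fun z => (V z).2) p = -((Jc n).comp (fderiv ℝ (fun z => (V z).1) p)) := by
    rw [h2]
    have : (fun z => -J ((V z).1)) = fun z => -(J ((V z).1)) := rfl
    rw [this, fderiv_fun_neg, fderiv_J_comp hd]
  unfold DD
  rw [hfd2]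
  simp only [ContinuousLinearMap.neg_apply, ContinuousLinearMap.comp_apply, Jc_apply,
    Prod.mk.injEq]
  constructor <;> abel

/-- The first component of the bracket of two holomorphic fields. -/
lemma bracket_fst {U V : E n → CV n}
    (hU1 : ContDiff ℝ (⊤:ℕ∞) (fun z => (U z).1)) (hU2 : ∀ z, (U z).2 = -J ((U z).1))
    (hV1 : ContDiff ℝ (⊤:ℕ∞) (fun z => (V z).1)) (hV2 : ∀ z, (V z).2 = -J ((V z).1))
    (p : E n) :
    (bracket U V p).1
      = fderiv ℝ (fun z => (V z).1) p ((U p).1)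
        - J (fderiv ℝ (fun z => (V z).1) p (J ((U p).1)))
        - fderiv ℝ (fun z => (U z).1) p ((V p).1)
        + J (fderiv ℝ (fun z => (U z).1) p (J ((V p).1))) := by
  unfold bracket
  rw [DD_holo hV1 hV2, DD_holo hU1 hU2]
  simp only [Prod.sub_def, hU2 p, hV2 p, map_neg, J_neg]
  abel

/-- The second component of the bracket of two holomorphic fields. -/
lemma bracket_snd {U V : E n → CV n}
    (hU1 : ContDiff ℝ (⊤:ℕ∞) (fun z => (U z).1)) (hU2 : ∀ z, (U z).2 = -J ((U z).1))
    (hV1 : ContDiff ℝ (⊤:ℕ∞) (fun z => (V z).1)) (hV2 : ∀ z, (V z).2 = -J ((V z).1))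
    (p : E n) :
    (bracket U V p).2 = -J ((bracket U V p).1) := by
  rw [bracket_fst hU1 hU2 hV1 hV2 p]
  unfold bracket
  rw [DD_holo hV1 hV2, DD_holo hU1 hU2]
  simp only [Prod.sub_def, hU2 p, hV2 p, map_neg, J_neg, J_add, J_sub, J_J, neg_neg]
  abel


end Holo
set_option maxHeartbeats 2000000
section Holo
variable {n : ℕ} {M : Set (E n)} {ν : E n → E n}
/-- Goal 1 core: the bracket of holomorphic fields is hermitian-orthogonal to `ν`. -/
lemma bracket_orth {U V : E n → CV n} (hsurf : IsHypersurface M ν)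
    (hU : IsHoloField M ν U) (hV : IsHoloField M ν V) {p : E n} (hp : p ∈ M) :
    rI (ν p) ((bracket U V p).1) = 0 ∧ rI (J (ν p)) ((bracket U V p).1) = 0 := by
  set Xf : E n → E n := fun z => (U z).1 with hXf
  set Yf : E n → E n := fun z => (V z).1 with hYf
  have hXs : ContDiff ℝ (⊤:ℕ∞) Xf := hU.1
  have hYs : ContDiff ℝ (⊤:ℕ∞) Yf := hV.1
  have hJXs : ContDiff ℝ (⊤:ℕ∞) (fun z => J (Xf z)) := contDiff_J_comp hXs
  have hJYs : ContDiff ℝ (⊤:ℕ∞) (fun z => J (Yf z)) := contDiff_J_comp hYs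
  have hXt : ∀ z ∈ M, rI (ν z) (Xf z) = 0 := fun z hz => holo_rI1 hU hz
  have hYt : ∀ z ∈ M, rI (ν z) (Yf z) = 0 := fun z hz => holo_rI1 hV hz
  have hJXt : ∀ z ∈ M, rI (ν z) (J (Xf z)) = 0 := fun z hz => holo_rI2 hU hz
  have hJYt : ∀ z ∈ M, rI (ν z) (J (Yf z)) = 0 := fun z hz => holo_rI2 hV hz
  have hXd : DifferentiableAt ℝ Xf p := (hXs.differentiable le_inf1).differentiableAt
  have hYd : DifferentiableAt ℝ Yf p := (hYs.differentiable le_inf1).differentiableAt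
  set A := fderiv ℝ Yf p with hA
  set B := fderiv ℝ Xf p with hB
  set X := Xf p with hXp
  set Y := Yf p with hYp
  have hfJY : fderiv ℝ (fun z => J (Yf z)) p = (Jc n).comp A := fderiv_J_comp hYd
  have hfJX : fderiv ℝ (fun z => J (Xf z)) p = (Jc n).comp B := fderiv_J_comp hXd
  -- four applications of tangent_bracket
  have t1 : rI (ν p) (A X - B Y) = 0 := tangent_bracket (P := Yf) (Q := Xf) hsurf hp hYs hXs hYt hXt
  have t2 : rI (ν p) (J (A (J X)) - J (B (J Y))) = 0 := by
    have := tangent_bracket hsurf hp hJYs hJXs hJYt hJXt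
    rwa [hfJY, hfJX] at this
  have t3 : rI (ν p) (J (A X) - B (J Y)) = 0 := by
    have := tangent_bracket hsurf hp hJYs hXs hJYt hXt
    rwa [hfJY] at this
  have t4 : rI (ν p) (A (J X) - J (B Y)) = 0 := by
    have := tangent_bracket hsurf hp hYs hJXs hYt hJXt
    rwa [hfJX] at this
  have hC : (bracket U V p).1 = A X - J (A (J X)) - B Y + J (B (J Y)) :=
    bracket_fst hU.1 hU.2.1 hV.1 hV.2.1 p
  constructor
  · rw [hC]
    have e : A X - J (A (J X)) - B Y + J (B (J Y))
        = (A X - B Y) - (J (A (J X)) - J (B (J Y))) := by abel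
    rw [e, rI_sub_right, t1, t2, sub_zero]
  · rw [hC]
    have e : J (A X - J (A (J X)) - B Y + J (B (J Y)))
        = (J (A X) - B (J Y)) + (A (J X) - J (B Y)) := by
      rw [J_add, J_sub, J_sub, J_J, J_J]; abel
    rw [rI_J_swap (ν p) _, e, rI_add_right, rI_sub_right, rI_sub_right]
    have := t3; have := t4
    rw [rI_sub_right] at t3 t4
    linarith
end Holo
section Nabla
variable {n : ℕ} {M : Set (E n)} {ν : E n → E n}

lemma half_add (v : E n) : (2:ℝ)⁻¹ • (v + v) = v := by
  rw [← two_smul ℝ v, smul_smul]; norm_num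

lemma contDiff_horR (hν : ContDiff ℝ (⊤:ℕ∞) ν) {Yf : E n → E n}
    (hY : ContDiff ℝ (⊤:ℕ∞) Yf) :
    ContDiff ℝ (⊤:ℕ∞) (fun z => horR ν z (Yf z)) :=
  (hY.sub ((contDiff_rI_comp hν hY).smul hν)).sub
    ((contDiff_rI_comp (contDiff_J_comp hν) hY).smul (contDiff_J_comp hν))

lemma fderiv_horR (hsurf : IsHypersurface M ν) {p : E n} (hp : p ∈ M)
    {Yf : E n → E n} (hYs : ContDiff ℝ (⊤:ℕ∞) Yf)
    (h1 : ∀ z ∈ M, rI (ν z) (Yf z) = 0) (h2 : ∀ z ∈ M, rI (J (ν z)) (Yf z) = 0)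
    {w : E n} (hw : rI (ν p) w = 0) :
    fderiv ℝ (fun z => horR ν z (Yf z)) p w = fderiv ℝ Yf p w := by
  have hν := hsurf.1
  have hνd : DifferentiableAt ℝ ν p := (hν.differentiable le_inf1).differentiableAt
  have hYd : DifferentiableAt ℝ Yf p := (hYs.differentiable le_inf1).differentiableAt
  have hJνd : DifferentiableAt ℝ (fun z => J (ν z)) p :=
    ((contDiff_J_comp hν).differentiable le_inf1).differentiableAt
  set c : E n → ℝ := fun z => rI (ν z) (Yf z) with hc
  set d : E n → ℝ := fun z => rI (J (ν z)) (Yf z) with hd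
  have hcd : DifferentiableAt ℝ c p :=
    ((contDiff_rI_comp hν hYs).differentiable le_inf1).differentiableAt
  have hdd : DifferentiableAt ℝ d p :=
    ((contDiff_rI_comp (contDiff_J_comp hν) hYs).differentiable le_inf1).differentiableAt
  have hc0 : c p = 0 := h1 p hp
  have hd0 : d p = 0 := h2 p hp
  have hcw : fderiv ℝ c p w = 0 :=
    key hsurf hp hcd (Filter.Eventually.of_forall (fun z hz => h1 z hz)) hw
  have hdw : fderiv ℝ d p w = 0 :=
    key hsurf hp hdd (Filter.Eventually.of_forall (fun z hz => h2 z hz)) hw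
  have hsm1 : DifferentiableAt ℝ (fun z => c z • ν z) p := hcd.smul hνd
  have hsm2 : DifferentiableAt ℝ (fun z => d z • J (ν z)) p := hdd.smul hJνd
  have hexp : (fun z => horR ν z (Yf z)) = fun z => Yf z - c z • ν z - d z • J (ν z) := rfl
  rw [hexp, fderiv_fun_sub (hYd.fun_sub hsm1) hsm2, fderiv_fun_sub hYd hsm1,
    fderiv_fun_smul hcd hνd, fderiv_fun_smul hdd hJνd]
  simp [hc0, hd0, hcw, hdw]

lemma fderiv_PiH_all (hsurf : IsHypersurface M ν) {p : E n} (hp : p ∈ M)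
    {V : E n → CV n} (hV : IsHoloField M ν V) {w : E n} (hw : rI (ν p) w = 0) :
    fderiv ℝ (fun z => (PiH ν z (V z)).1) p w = fderiv ℝ (fun z => (V z).1) p w ∧
    fderiv ℝ (fun z => (PiH ν z (V z)).2) p w = fderiv ℝ (fun z => (V z).2) p w ∧
    fderiv ℝ (fun z => (PiHb ν z (V z)).1) p w = 0 ∧
    fderiv ℝ (fun z => (PiHb ν z (V z)).2) p w = 0 := by
  have hν := hsurf.1
  set V1 : E n → E n := fun z => (V z).1 with hV1def
  have hV1s : ContDiff ℝ (⊤:ℕ∞) V1 := hV.1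
  have hV2eq : (fun z => (V z).2) = fun z => -J (V1 z) := funext hV.2.1
  have hV2s : ContDiff ℝ (⊤:ℕ∞) (fun z => (V z).2) := by
    rw [hV2eq]; exact (contDiff_J_comp hV1s).neg
  -- tangency hypotheses
  have t11 : ∀ z ∈ M, rI (ν z) (V1 z) = 0 := fun z hz => holo_rI1 hV hz
  have t12 : ∀ z ∈ M, rI (J (ν z)) (V1 z) = 0 := fun z hz => holo_rI3 hV hz
  have t21 : ∀ z ∈ M, rI (ν z) ((V z).2) = 0 := by
    intro z hz; rw [hV.2.1 z, rI_neg_right, holo_rI2 hV hz, neg_zero]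
  have t22 : ∀ z ∈ M, rI (J (ν z)) ((V z).2) = 0 := by
    intro z hz; rw [hV.2.1 z, rI_neg_right, rI_J_J, holo_rI1 hV hz, neg_zero]
  -- derivatives of the horizontal projections
  have hH1s : ContDiff ℝ (⊤:ℕ∞) (fun z => horR ν z (V1 z)) := contDiff_horR hν hV1s
  have hH2s : ContDiff ℝ (⊤:ℕ∞) (fun z => horR ν z ((V z).2)) := contDiff_horR hν hV2s
  have hH1d : DifferentiableAt ℝ (fun z => horR ν z (V1 z)) p :=
    (hH1s.differentiable le_inf1).differentiableAt
  have hH2d : DifferentiableAt ℝ (fun z => horR ν z ((V z).2)) p :=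
    (hH2s.differentiable le_inf1).differentiableAt
  have hJH2d : DifferentiableAt ℝ (fun z => J (horR ν z ((V z).2))) p :=
    ((contDiff_J_comp hH2s).differentiable le_inf1).differentiableAt
  have hJH1d : DifferentiableAt ℝ (fun z => J (horR ν z (V1 z))) p :=
    ((contDiff_J_comp hH1s).differentiable le_inf1).differentiableAt
  have hV1d : DifferentiableAt ℝ V1 p := (hV1s.differentiable le_inf1).differentiableAt
  have e1 : fderiv ℝ (fun z => horR ν z (V1 z)) p w = fderiv ℝ V1 p w :=
    fderiv_horR hsurf hp hV1s t11 t12 hw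
  have e2 : fderiv ℝ (fun z => horR ν z ((V z).2)) p w = fderiv ℝ (fun z => (V z).2) p w :=
    fderiv_horR hsurf hp hV2s t21 t22 hw
  have e3 : fderiv ℝ (fun z => (V z).2) p w = -J (fderiv ℝ V1 p w) := by
    rw [hV2eq]
    have : (fun z => -J (V1 z)) = fun z => -(J (V1 z)) := rfl
    rw [this, fderiv_fun_neg, fderiv_J_comp hV1d]
    simp
  set a := fderiv ℝ V1 p w with ha
  -- PiH first component
  have p1 : (fun z => (PiH ν z (V z)).1)
      = fun z => (2:ℝ)⁻¹ • (horR ν z (V1 z) + J (horR ν z ((V z).2))) := rfl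
  have p2 : (fun z => (PiH ν z (V z)).2)
      = fun z => (2:ℝ)⁻¹ • (horR ν z ((V z).2) - J (horR ν z (V1 z))) := rfl
  have q1 : (fun z => (PiHb ν z (V z)).1)
      = fun z => (2:ℝ)⁻¹ • (horR ν z (V1 z) - J (horR ν z ((V z).2))) := rfl
  have q2 : (fun z => (PiHb ν z (V z)).2)
      = fun z => (2:ℝ)⁻¹ • (horR ν z ((V z).2) + J (horR ν z (V1 z))) := rfl
  have hfJ2 : fderiv ℝ (fun z => J (horR ν z ((V z).2))) p w
      = J (fderiv ℝ (fun z => horR ν z ((V z).2)) p w) := by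
    rw [fderiv_J_comp hH2d]; rfl
  have hfJ1 : fderiv ℝ (fun z => J (horR ν z (V1 z))) p w
      = J (fderiv ℝ (fun z => horR ν z (V1 z)) p w) := by
    rw [fderiv_J_comp hH1d]; rfl
  refine ⟨?_, ?_, ?_, ?_⟩
  · rw [p1, fderiv_fun_const_smul (hH1d.fun_add hJH2d), fderiv_fun_add hH1d hJH2d]
    simp only [ContinuousLinearMap.smul_apply, ContinuousLinearMap.add_apply]
    rw [hfJ2, e2, e3, e1, J_neg, J_J, neg_neg, half_add]
  · rw [p2, fderiv_fun_const_smul (hH2d.fun_sub hJH1d), fderiv_fun_sub hH2d hJH1d]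
    simp only [ContinuousLinearMap.smul_apply, ContinuousLinearMap.sub_apply]
    rw [hfJ1, e2, e3, e1]
    rw [show (-J a - J a : E n) = -J a + -J a from by abel, half_add]
  · rw [q1, fderiv_fun_const_smul (hH1d.fun_sub hJH2d), fderiv_fun_sub hH1d hJH2d]
    simp only [ContinuousLinearMap.smul_apply, ContinuousLinearMap.sub_apply]
    rw [hfJ2, e2, e3, e1, J_neg, J_J, neg_neg, sub_self, smul_zero]
  · rw [q2, fderiv_fun_const_smul (hH2d.fun_add hJH1d), fderiv_fun_add hH2d hJH1d]
    simp only [ContinuousLinearMap.smul_apply, ContinuousLinearMap.add_apply]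
    rw [hfJ1, e2, e3, e1]
    rw [show (-J a + J a = (0 : E n)) from by abel, smul_zero]

end Nabla
section Final
variable {n : ℕ} {M : Set (E n)} {ν : E n → E n}

lemma gC_sub_left (a b w : CV n) : gC (a - b) w = gC a w - gC b w := by
  simp only [gC, Prod.fst_sub, Prod.snd_sub, rI_sub_left]
  push_cast
  ring

lemma gC_zero_left (w : CV n) : gC 0 w = 0 := by
  simp [gC, rI]

lemma csmul_zero_left (v : CV n) : csmul 0 v = 0 := by
  simp [csmul]

/-- The `g(·, N̄)`-pairing of a holomorphic-shaped vector orthogonal to `ν` and `Jν`. -/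
lemma gC_holo_NF {p : E n} {C : E n} (h1 : rI (ν p) C = 0) (h2 : rI (J (ν p)) C = 0) :
    gC (C, -J C) (conjCV (NF ν p)) = 0 := by
  have hconj : conjCV (NF ν p) = ((Real.sqrt 2)⁻¹ • ν p, (Real.sqrt 2)⁻¹ • J (ν p)) := by
    simp [conjCV, NF]
  rw [hconj]
  have e1 : rI C ((Real.sqrt 2)⁻¹ • ν p) = 0 := by
    rw [rI_smul_right, rI_symm, h1, mul_zero]
  have e2 : rI (-J C) ((Real.sqrt 2)⁻¹ • J (ν p)) = 0 := by
    rw [rI_neg_left, rI_smul_right, rI_J_J, rI_symm, h1, mul_zero, neg_zero]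
  have e3 : rI C ((Real.sqrt 2)⁻¹ • J (ν p)) = 0 := by
    rw [rI_smul_right, rI_symm, rI_J_left]
    rw [rI_J_left] at h2
    rw [h2, mul_zero]
  have e4 : rI (-J C) ((Real.sqrt 2)⁻¹ • ν p) = 0 := by
    rw [rI_neg_left, rI_smul_right, rI_J_left]
    have := h2
    rw [rI_J_left] at this
    rw [show ((inner ℂ C (ν p) : ℂ)).im = -((inner ℂ (ν p) C : ℂ)).im from by
      rw [← inner_conj_symm (𝕜 := ℂ) C (ν p), Complex.conj_im], this]
    simp
  rw [gC, e1, e2, e3, e4]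
  norm_num

/-- The `T`-component function `g(V, T)` of a holomorphic field vanishes to first
order along tangent directions. -/
lemma dC_gVT (hsurf : IsHypersurface M ν) {p : E n} (hp : p ∈ M)
    {V : E n → CV n} (hV : IsHoloField M ν V) (u : CV n)
    (hu1 : rI (ν p) u.1 = 0) (hu2 : rI (ν p) u.2 = 0) :
    dC (fun z => gC (V z) (TF ν z)) u p = 0 := by
  have hν := hsurf.1
  set a : E n → ℝ := fun z => rI ((V z).1) (J (ν z)) with hadef
  set b : E n → ℝ := fun z => rI ((V z).2) (J (ν z)) with hbdef
  have hfe : (fun z => gC (V z) (TF ν z)) = fun z => a z • (1:ℂ) + b z • Complex.I := by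
    funext z
    simp only [gC, TF, rI_zero_right, sub_zero, zero_add, hadef, hbdef]
    simp [Complex.real_smul]
  have hV2s : ContDiff ℝ (⊤:ℕ∞) (fun z => (V z).2) := by
    rw [funext hV.2.1]; exact (contDiff_J_comp hV.1).neg
  have had : DifferentiableAt ℝ a p :=
    ((contDiff_rI_comp hV.1 (contDiff_J_comp hν)).differentiable le_inf1).differentiableAt
  have hbd : DifferentiableAt ℝ b p :=
    ((contDiff_rI_comp hV2s (contDiff_J_comp hν)).differentiable le_inf1).differentiableAt
  have ha0 : ∀ z ∈ M, a z = 0 := by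
    intro z hz
    show rI ((V z).1) (J (ν z)) = 0
    rw [rI_symm]; exact holo_rI3 hV hz
  have hb0 : ∀ z ∈ M, b z = 0 := by
    intro z hz
    show rI ((V z).2) (J (ν z)) = 0
    rw [hV.2.1 z, rI_neg_left, rI_J_J, rI_symm, holo_rI1 hV hz, neg_zero]
  have hfd : ∀ w : E n, rI (ν p) w = 0 → fderiv ℝ (fun z => gC (V z) (TF ν z)) p w = 0 := by
    intro w hw
    have haw : fderiv ℝ a p w = 0 :=
      key hsurf hp had (Filter.Eventually.of_forall (fun z hz => ha0 z hz)) hw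
    have hbw : fderiv ℝ b p w = 0 :=
      key hsurf hp hbd (Filter.Eventually.of_forall (fun z hz => hb0 z hz)) hw
    rw [hfe, fderiv_fun_add (had.smul_const (1:ℂ)) (hbd.smul_const Complex.I)]
    rw [fderiv_smul_const had (1:ℂ), fderiv_smul_const hbd Complex.I]
    simp [haw, hbw]
  unfold dC
  rw [hfd u.1 hu1, hfd u.2 hu2]
  simp

/-- Simplification of `nabla` on a holomorphic field along a complex-tangent direction. -/
lemma nabla_holo (hsurf : IsHypersurface M ν) {p : E n} (hp : p ∈ M)
    {V : E n → CV n} (hV : IsHoloField M ν V) (u : CV n)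
    (hu1 : rI (ν p) u.1 = 0) (hu2 : rI (ν p) u.2 = 0) :
    nabla ν V u p = DD V u p - csmul (gC (DD V u p) (conjCV (NF ν p))) (NF ν p) := by
  have h1 := fderiv_PiH_all hsurf hp hV hu1
  have h2 := fderiv_PiH_all hsurf hp hV hu2
  have hDDH : DD (fun z => PiH ν z (V z)) u p = DD V u p := by
    unfold DD
    rw [h1.1, h2.1, h1.2.1, h2.2.1]
  have hDDHb : DD (fun z => PiHb ν z (V z)) u p = 0 := by
    unfold DD
    rw [h1.2.2.1, h2.2.2.1, h1.2.2.2, h2.2.2.2]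
    simp
  unfold nabla
  rw [hDDH, hDDHb, dC_gVT hsurf hp hV u hu1 hu2, gC_zero_left, csmul_zero_left,
    csmul_zero_left]
  abel

end Final
lemma le_inf_succ : ((⊤:ℕ∞) : WithTop ℕ∞) + 1 ≤ ((⊤:ℕ∞) : WithTop ℕ∞) := by decide

theorem stmt8 {n : ℕ} (M : Set (E n)) (ν : E n → E n)
    (hsurf : IsHypersurface M ν)
    (U V : E n → CV n) (hU : IsHoloField M ν U) (hV : IsHoloField M ν V) :
    IsHoloField M ν (bracket U V) ∧
    ∀ p ∈ M, nabla ν V (U p) p - nabla ν U (V p) p = bracket U V p := by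
  have hfU1 : ContDiff ℝ (⊤:ℕ∞) (fun z => (U z).1) := hU.1
  have hfV1 : ContDiff ℝ (⊤:ℕ∞) (fun z => (V z).1) := hV.1
  have hfU2 : ContDiff ℝ (⊤:ℕ∞) (fun z => (U z).2) := by
    rw [funext hU.2.1]; exact (contDiff_J_comp hfU1).neg
  have hfV2 : ContDiff ℝ (⊤:ℕ∞) (fun z => (V z).2) := by
    rw [funext hV.2.1]; exact (contDiff_J_comp hfV1).neg
  constructor
  · refine ⟨?_, fun z => bracket_snd hU.1 hU.2.1 hV.1 hV.2.1 z, ?_⟩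
    · -- smoothness of the first component of the bracket
      have hdU1 : ContDiff ℝ (⊤:ℕ∞) (fderiv ℝ (fun z => (U z).1)) :=
        hfU1.fderiv_right le_inf_succ
      have hdV1 : ContDiff ℝ (⊤:ℕ∞) (fderiv ℝ (fun z => (V z).1)) :=
        hfV1.fderiv_right le_inf_succ
      have hdU2 : ContDiff ℝ (⊤:ℕ∞) (fderiv ℝ (fun z => (U z).2)) :=
        hfU2.fderiv_right le_inf_succ
      have hdV2 : ContDiff ℝ (⊤:ℕ∞) (fderiv ℝ (fun z => (V z).2)) :=
        hfV2.fderiv_right le_inf_succ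
      have hshape : (fun z => (bracket U V z).1)
          = fun z => (fderiv ℝ (fun y => (V y).1) z) ((U z).1)
              - (fderiv ℝ (fun y => (V y).2) z) ((U z).2)
              - ((fderiv ℝ (fun y => (U y).1) z) ((V z).1)
                - (fderiv ℝ (fun y => (U y).2) z) ((V z).2)) := rfl
      rw [hshape]
      exact ((hdV1.clm_apply hfU1).sub (hdV2.clm_apply hfU2)).sub
        ((hdU1.clm_apply hfV1).sub (hdU2.clm_apply hfV2))
    · -- hermitian orthogonality on M
      intro p hp
      obtain ⟨o1, o2⟩ := bracket_orth hsurf hU hV hp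
      apply Complex.ext
      · simpa [rI] using o1
      · rw [rI_J_left] at o2
        simpa using o2
  · intro p hp
    have hu1 : rI (ν p) ((U p).1) = 0 := holo_rI1 hU hp
    have hu2 : rI (ν p) ((U p).2) = 0 := by
      rw [hU.2.1 p, rI_neg_right, holo_rI2 hU hp, neg_zero]
    have hv1 : rI (ν p) ((V p).1) = 0 := holo_rI1 hV hp
    have hv2 : rI (ν p) ((V p).2) = 0 := by
      rw [hV.2.1 p, rI_neg_right, holo_rI2 hV hp, neg_zero]
    rw [nabla_holo hsurf hp hV (U p) hu1 hu2, nabla_holo hsurf hp hU (V p) hv1 hv2]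
    have hbr0 : gC (bracket U V p) (conjCV (NF ν p)) = 0 := by
      have hb2 : bracket U V p = ((bracket U V p).1, -J ((bracket U V p).1)) := by
        have h := bracket_snd hU.1 hU.2.1 hV.1 hV.2.1 p
        exact Prod.ext rfl h
      rw [hb2]
      exact gC_holo_NF (bracket_orth hsurf hU hV hp).1 (bracket_orth hsurf hU hV hp).2
    have hdiff : gC (DD V (U p) p) (conjCV (NF ν p))
        = gC (DD U (V p) p) (conjCV (NF ν p)) := by
      have h0 : gC (DD V (U p) p) (conjCV (NF ν p))
          - gC (DD U (V p) p) (conjCV (NF ν p)) = 0 := by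
        rw [← gC_sub_left]
        exact hbr0
      exact sub_eq_zero.mp h0
    rw [hdiff]
    show _ = DD V (U p) p - DD U (V p) p
    abel
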